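/- Let S₁ ⊂ ℂ^{d₁} ⊗ ℂ^{d₂} and S₂ ⊂ ℂ^{d₁'} ⊗ ℂ^{d₂'} be finite sets of nonzero product vectors such that no nonzero product vector is orthogonal to all elements of S₁ (in ℂ^{d₁} ⊗ ℂ^{d₂}) and no nonzero product vector is orthogonal to all elements of S₂ (in ℂ^{d₁'} ⊗ ℂ^{d₂'}). Then, regarding tensor products v₁ ⊗ v₂ for v₁ ∈ S₁, v₂ ∈ S₂ as product vectors in (ℂ^{d₁} ⊗ ℂ^{d₁'}) ⊗ (ℂ^{d₂} ⊗ ℂ^{d₂'}) under the natural reordering isomorphism, no nonzero product vector a ⊗ b with a ∈ ℂ^{d₁} ⊗ ℂ^{d₁'}, b ∈ ℂ^{d₂} ⊗ ℂ^{d₂'} is orthogonal to all vectors v₁ ⊗ v₂ with v₁ ∈ S₁, v₂ ∈ S₂. -/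

import Mathlib

open scoped ComplexConjugate

/-- The product (tensor) vector u ⊗ w, for general finite index types. -/
noncomputable def tp {ι κ : Type*} [Fintype ι] [Fintype κ]
    (u : EuclideanSpace ℂ ι) (w : EuclideanSpace ℂ κ) : EuclideanSpace ℂ (ι × κ) :=
  WithLp.toLp 2 (fun p : ι × κ => u p.1 * w p.2)

/-- The natural reordering of a ⊗ b, with a ∈ ℂ^{d₁} ⊗ ℂ^{d₁'} and
b ∈ ℂ^{d₂} ⊗ ℂ^{d₂'}, viewed as a vector of
(ℂ^{d₁} ⊗ ℂ^{d₂}) ⊗ (ℂ^{d₁'} ⊗ ℂ^{d₂'}). -/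
noncomputable def reord {d₁ d₂ d₁' d₂' : ℕ}
    (a : EuclideanSpace ℂ (Fin d₁ × Fin d₁')) (b : EuclideanSpace ℂ (Fin d₂ × Fin d₂')) :
    EuclideanSpace ℂ ((Fin d₁ × Fin d₂) × (Fin d₁' × Fin d₂')) :=
  WithLp.toLp 2 (fun p : (Fin d₁ × Fin d₂) × (Fin d₁' × Fin d₂') =>
    a (p.1.1, p.2.1) * b (p.1.2, p.2.2))

lemma inner_tp_tp {ι κ : Type*} [Fintype ι] [Fintype κ]
    (u α : EuclideanSpace ℂ ι) (w β : EuclideanSpace ℂ κ) :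
    (inner ℂ (tp u w) (tp α β) : ℂ) = inner ℂ u α * inner ℂ w β := by
  simp only [PiLp.inner_apply, tp, PiLp.toLp_apply, RCLike.inner_apply, map_mul,
    Fintype.sum_prod_type, Finset.sum_mul_sum]
  apply Finset.sum_congr rfl; intro i _
  apply Finset.sum_congr rfl; intro j _
  ring

lemma tp_eq_zero {ι κ : Type*} [Fintype ι] [Fintype κ]
    {p : EuclideanSpace ℂ ι} {q : EuclideanSpace ℂ κ} (h : tp p q = 0) :
    p = 0 ∨ q = 0 := by
  by_cases hp : p = 0
  · exact Or.inl hp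
  · right
    obtain ⟨i, hi⟩ : ∃ i, p i ≠ 0 := by
      by_contra h'; push_neg at h'; exact hp (by ext i; simpa using h' i)
    ext j
    have h0 : p i * q j = 0 := by simpa [tp] using congrArg (fun v => v (i, j)) h
    simpa using (mul_eq_zero.mp h0).resolve_left hi

/-- partial-contraction of v₁ with reord a b -/
noncomputable def Mv {d₁ d₂ d₁' d₂' : ℕ}
    (a : EuclideanSpace ℂ (Fin d₁ × Fin d₁')) (b : EuclideanSpace ℂ (Fin d₂ × Fin d₂'))
    (v₁ : EuclideanSpace ℂ (Fin d₁ × Fin d₂)) : EuclideanSpace ℂ (Fin d₁' × Fin d₂') :=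
  WithLp.toLp 2 (fun p : Fin d₁' × Fin d₂' => ∑ i, ∑ j, conj (v₁ (i, j)) * a (i, p.1) * b (j, p.2))

lemma inner_reord {d₁ d₂ d₁' d₂' : ℕ}
    (a : EuclideanSpace ℂ (Fin d₁ × Fin d₁')) (b : EuclideanSpace ℂ (Fin d₂ × Fin d₂'))
    (v₁ : EuclideanSpace ℂ (Fin d₁ × Fin d₂)) (v₂ : EuclideanSpace ℂ (Fin d₁' × Fin d₂')) :
    (inner ℂ (tp v₁ v₂) (reord a b) : ℂ) = inner ℂ v₂ (Mv a b v₁) := by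
  simp only [PiLp.inner_apply, tp, reord, Mv, PiLp.toLp_apply, RCLike.inner_apply', map_mul]
  rw [Fintype.sum_prod_type, Finset.sum_comm]
  apply Finset.sum_congr rfl; intro p₂ _
  rw [Fintype.sum_prod_type, Finset.mul_sum]
  apply Finset.sum_congr rfl; intro i _
  rw [Finset.mul_sum]
  apply Finset.sum_congr rfl; intro j _
  ring

lemma Mv_tp {d₁ d₂ d₁' d₂' : ℕ}
    (a : EuclideanSpace ℂ (Fin d₁ × Fin d₁')) (b : EuclideanSpace ℂ (Fin d₂ × Fin d₂'))
    (u : EuclideanSpace ℂ (Fin d₁)) (w : EuclideanSpace ℂ (Fin d₂)) :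
    Mv a b (tp u w) = tp (WithLp.toLp 2 (fun i' => ∑ i, conj (u i) * a (i, i')))
      (WithLp.toLp 2 (fun j' => ∑ j, conj (w j) * b (j, j'))) := by
  ext p
  simp only [Mv, tp, PiLp.toLp_apply, map_mul, Finset.sum_mul_sum]
  apply Finset.sum_congr rfl; intro i _
  apply Finset.sum_congr rfl; intro j _
  ring

/-- the tensor product of two unextendible product bases is
again unextendible with respect to the bipartite cut. -/
theorem stmt8 (d₁ d₂ d₁' d₂' : ℕ)
    (S₁ : Set (EuclideanSpace ℂ (Fin d₁ × Fin d₂)))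
    (S₂ : Set (EuclideanSpace ℂ (Fin d₁' × Fin d₂')))
    (hS₁fin : S₁.Finite) (hS₂fin : S₂.Finite)
    (hS₁prod : ∀ v ∈ S₁, v ≠ 0 ∧ ∃ (u : EuclideanSpace ℂ (Fin d₁))
      (w : EuclideanSpace ℂ (Fin d₂)), v = tp u w)
    (hS₂prod : ∀ v ∈ S₂, v ≠ 0 ∧ ∃ (u : EuclideanSpace ℂ (Fin d₁'))
      (w : EuclideanSpace ℂ (Fin d₂')), v = tp u w)
    (hS₁upb : ¬ ∃ (u : EuclideanSpace ℂ (Fin d₁)) (w : EuclideanSpace ℂ (Fin d₂)),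
        tp u w ≠ 0 ∧ ∀ v ∈ S₁, inner ℂ v (tp u w) = (0 : ℂ))
    (hS₂upb : ¬ ∃ (u : EuclideanSpace ℂ (Fin d₁')) (w : EuclideanSpace ℂ (Fin d₂')),
        tp u w ≠ 0 ∧ ∀ v ∈ S₂, inner ℂ v (tp u w) = (0 : ℂ)) :
    ¬ ∃ (a : EuclideanSpace ℂ (Fin d₁ × Fin d₁')) (b : EuclideanSpace ℂ (Fin d₂ × Fin d₂')),
        reord a b ≠ 0 ∧
        ∀ v₁ ∈ S₁, ∀ v₂ ∈ S₂, inner ℂ (tp v₁ v₂) (reord a b) = (0 : ℂ) := by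
  rintro ⟨a, b, hab, horth⟩
  -- a and b are nonzero
  have ha : a ≠ 0 := by
    rintro rfl; apply hab; ext p; simp [reord]
  have hb : b ≠ 0 := by
    rintro rfl; apply hab; ext p; simp [reord]
  obtain ⟨⟨i₀, i₀'⟩, hai⟩ : ∃ p, a p ≠ 0 := by
    by_contra h'; push_neg at h'; exact ha (by ext p; simpa using h' p)
  obtain ⟨⟨j₀, j₀'⟩, hbj⟩ : ∃ p, b p ≠ 0 := by
    by_contra h'; push_neg at h'; exact hb (by ext p; simpa using h' p)
  set α : EuclideanSpace ℂ (Fin d₁) := WithLp.toLp 2 (fun i => a (i, i₀')) with hα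
  set β : EuclideanSpace ℂ (Fin d₂) := WithLp.toLp 2 (fun j => b (j, j₀')) with hβ
  apply hS₁upb
  refine ⟨α, β, ?_, ?_⟩
  · intro h
    have h0 : a (i₀, i₀') * b (j₀, j₀') = 0 := by
      simpa [tp, hα, hβ] using congrArg (fun v => v (i₀, j₀)) h
    rcases mul_eq_zero.mp h0 with h' | h'
    · exact hai h'
    · exact hbj h'
  · intro v₁ hv₁
    obtain ⟨-, u, w, rfl⟩ := hS₁prod v₁ hv₁
    -- the partial contraction must be the zero product vector
    have hM : Mv a b (tp u w) = 0 := by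
      by_contra hMne
      apply hS₂upb
      refine ⟨WithLp.toLp 2 (fun i' => ∑ i, conj (u i) * a (i, i')),
        WithLp.toLp 2 (fun j' => ∑ j, conj (w j) * b (j, j')), ?_, ?_⟩
      · rw [← Mv_tp a b u w]; exact hMne
      · intro v₂ hv₂
        rw [← Mv_tp a b u w, ← inner_reord]
        exact horth _ hv₁ _ hv₂
    rw [Mv_tp] at hM
    rcases tp_eq_zero hM with hp | hq
    · have h0 : (∑ i, conj (u i) * a (i, i₀')) = 0 := by simpa using congrArg (fun v => v i₀') hp
      rw [inner_tp_tp]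
      have : (inner ℂ u α : ℂ) = 0 := by
        rw [PiLp.inner_apply]; simpa [RCLike.inner_apply, hα, mul_comm] using h0
      rw [this, zero_mul]
    · have h0 : (∑ j, conj (w j) * b (j, j₀')) = 0 := by simpa using congrArg (fun v => v j₀') hq
      rw [inner_tp_tp]
      have : (inner ℂ w β : ℂ) = 0 := by
        rw [PiLp.inner_apply]; simpa [RCLike.inner_apply, hβ, mul_comm] using h0
      rw [this, mul_zero]
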